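/- arXiv:1702.08437 — 5 statements merged into one kernel-verified Lean document; each statement's English description precedes it below -/
import Mathlib

section
/- Let t₁ ≠ t₂ be real numbers, let g : ℝ → ℝ be differentiable, and let ẏ₁, ẏ₂ be real numbers. Define y(t) = g(t) + (t(2t₂ − t))/(2(t₂ − t₁)) · (ẏ₁ − g'(t₁)) + (t(t − 2t₁))/(2(t₂ − t₁)) · (ẏ₂ − g'(t₂)). Then y is differentiable and its derivative satisfies the two constraints y'(t₁) = ẏ₁ and y'(t₂) = ẏ₂. -/
theorem stmt_0 (t₁ t₂ : ℝ) (ht : t₁ ≠ t₂) (g : ℝ → ℝ) (hg : Differentiable ℝ g)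
    (ydot₁ ydot₂ : ℝ) (y : ℝ → ℝ)
    (hy : ∀ t, y t = g t + (t * (2 * t₂ - t)) / (2 * (t₂ - t₁)) * (ydot₁ - deriv g t₁)
        + (t * (t - 2 * t₁)) / (2 * (t₂ - t₁)) * (ydot₂ - deriv g t₂)) :
    Differentiable ℝ y ∧ deriv y t₁ = ydot₁ ∧ deriv y t₂ = ydot₂ := by
  have hd : (2 * (t₂ - t₁)) ≠ 0 := by
    intro h
    apply ht
    linarith [sub_eq_zero.mp (by linarith : t₂ - t₁ = 0)]
  set c₁ := ydot₁ - deriv g t₁ with hc₁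
  set c₂ := ydot₂ - deriv g t₂ with hc₂
  have hfun : y = fun t => g t + (t * (2 * t₂ - t)) / (2 * (t₂ - t₁)) * c₁
      + (t * (t - 2 * t₁)) / (2 * (t₂ - t₁)) * c₂ := funext hy
  have key : ∀ t : ℝ, HasDerivAt y
      (deriv g t + (2 * t₂ - 2 * t) / (2 * (t₂ - t₁)) * c₁
        + (2 * t - 2 * t₁) / (2 * (t₂ - t₁)) * c₂) t := by
    intro t
    rw [hfun]
    have h1 : HasDerivAt g (deriv g t) t := (hg t).hasDerivAt
    have hid : HasDerivAt (fun t : ℝ => t) 1 t := hasDerivAt_id t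
    have h2 : HasDerivAt (fun t : ℝ => (t * (2 * t₂ - t)) / (2 * (t₂ - t₁)) * c₁)
        ((2 * t₂ - 2 * t) / (2 * (t₂ - t₁)) * c₁) t := by
      have := ((hid.mul ((hasDerivAt_const t (2 * t₂)).sub hid)).div_const
        (2 * (t₂ - t₁))).mul_const c₁
      exact this.congr_deriv (by simp only [Pi.sub_apply]; ring)
    have h3 : HasDerivAt (fun t : ℝ => (t * (t - 2 * t₁)) / (2 * (t₂ - t₁)) * c₂)
        ((2 * t - 2 * t₁) / (2 * (t₂ - t₁)) * c₂) t := by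
      have := ((hid.mul (hid.sub (hasDerivAt_const t (2 * t₁)))).div_const
        (2 * (t₂ - t₁))).mul_const c₂
      exact this.congr_deriv (by simp only [Pi.sub_apply]; ring)
    exact (h1.add h2).add h3
  refine ⟨fun t => (key t).differentiableAt, ?_, ?_⟩
  · rw [(key t₁).deriv]
    have : (2 * t₂ - 2 * t₁) / (2 * (t₂ - t₁)) = 1 := by
      rw [div_eq_one_iff_eq hd]; ring
    rw [this]
    simp [hc₁]
  · rw [(key t₂).deriv]
    have : (2 * t₂ - 2 * t₁) / (2 * (t₂ - t₁)) = 1 := by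
      rw [div_eq_one_iff_eq hd]; ring
    rw [this]
    simp [hc₂]
end

section
/- Let g : ℝ → ℝ be twice differentiable and let ÿ₁, y₂, y₃, ẏ₄ be real numbers. Define y(t) = g(t) + t(−4 + 4t − t²)/14 · (g''(−1) subtracted from ÿ₁, i.e. (ÿ₁ − g''(−1))) + (28 − 24t + 3t² + t³)/28 · (y₂ − g(0)) + t(24 − 3t − t²)/28 · (y₃ − g(2)) + (−10t + 3t² + t³)/14 · (ẏ₄ − g'(2)). Then y satisfies all four constraints: y''(−1) = ÿ₁, y(0) = y₂, y(2) = y₃, and y'(2) = ẏ₄. -/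
lemma poly_hasDerivAt (c0 c1 c2 c3 t : ℝ) :
    HasDerivAt (fun t : ℝ => c0 + c1 * t + c2 * t ^ 2 + c3 * t ^ 3)
      (c1 + 2 * c2 * t + 3 * c3 * t ^ 2) t := by
  have h1 := hasDerivAt_id t
  have h2 := hasDerivAt_pow 2 t
  have h3 := hasDerivAt_pow 3 t
  have := (((hasDerivAt_const t c0).add (h1.const_mul c1)).add
      ((h2.const_mul c2))).add (h3.const_mul c3)
  refine this.congr_deriv ?_
  push_cast; ring

lemma poly2_hasDerivAt (c0 c1 c2 t : ℝ) :
    HasDerivAt (fun t : ℝ => c0 + c1 * t + c2 * t ^ 2)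
      (c1 + 2 * c2 * t) t := by
  have h1 := hasDerivAt_id t
  have h2 := hasDerivAt_pow 2 t
  have := ((hasDerivAt_const t c0).add (h1.const_mul c1)).add (h2.const_mul c2)
  refine this.congr_deriv ?_
  push_cast; ring

theorem stmt_1 (g : ℝ → ℝ) (hg : Differentiable ℝ g) (hg' : Differentiable ℝ (deriv g))
    (yddot₁ y₂ y₃ ydot₄ : ℝ) (y : ℝ → ℝ)
    (hy : ∀ t, y t = g t
        + t * (-4 + 4 * t - t ^ 2) / 14 * (yddot₁ - deriv (deriv g) (-1))
        + (28 - 24 * t + 3 * t ^ 2 + t ^ 3) / 28 * (y₂ - g 0)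
        + t * (24 - 3 * t - t ^ 2) / 28 * (y₃ - g 2)
        + (-10 * t + 3 * t ^ 2 + t ^ 3) / 14 * (ydot₄ - deriv g 2)) :
    deriv (deriv y) (-1) = yddot₁ ∧ y 0 = y₂ ∧ y 2 = y₃ ∧ deriv y 2 = ydot₄ := by
  obtain ⟨a, ha⟩ : ∃ a, a = yddot₁ - deriv (deriv g) (-1) := ⟨_, rfl⟩
  obtain ⟨b, hb⟩ : ∃ b, b = y₂ - g 0 := ⟨_, rfl⟩
  obtain ⟨c, hc⟩ : ∃ c, c = y₃ - g 2 := ⟨_, rfl⟩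
  obtain ⟨d, hd⟩ : ∃ d, d = ydot₄ - deriv g 2 := ⟨_, rfl⟩
  obtain ⟨C1, hC1⟩ : ∃ x : ℝ, x = -2/7*a - 6/7*b + 6/7*c - 5/7*d := ⟨_, rfl⟩
  obtain ⟨C2, hC2⟩ : ∃ x : ℝ, x = 2/7*a + 3/28*b - 3/28*c + 3/14*d := ⟨_, rfl⟩
  obtain ⟨C3, hC3⟩ : ∃ x : ℝ, x = -1/14*a + 1/28*b - 1/28*c + 1/14*d := ⟨_, rfl⟩
  have hy' : y = fun t => g t + (b + C1 * t + C2 * t ^ 2 + C3 * t ^ 3) := by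
    funext t
    rw [hy t, hb, hC1, hC2, hC3, ← ha, ← hc, ← hd]
    rw [hb]
    ring
  have hder : ∀ t, HasDerivAt y
      (deriv g t + (C1 + 2 * C2 * t + 3 * C3 * t ^ 2)) t := by
    intro t
    rw [hy']
    exact ((hg t).hasDerivAt).add (poly_hasDerivAt b C1 C2 C3 t)
  have hdy : deriv y = fun t => deriv g t + (C1 + 2 * C2 * t + 3 * C3 * t ^ 2) := by
    funext t
    exact (hder t).deriv
  have hder2 : ∀ t, HasDerivAt (deriv y)
      (deriv (deriv g) t + (2 * C2 + 2 * (3 * C3) * t)) t := by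
    intro t
    rw [hdy]
    exact ((hg' t).hasDerivAt).add (poly2_hasDerivAt C1 (2 * C2) (3 * C3) t)
  refine ⟨?_, ?_, ?_, ?_⟩
  · rw [(hder2 (-1)).deriv, hC2, hC3, ha]
    ring
  · rw [hy']
    simp only
    rw [hb]
    ring
  · rw [hy']
    simp only
    rw [hC1, hC2, hC3, hb, hc]
    ring
  · rw [hdy]
    simp only
    rw [hC1, hC2, hC3, hd]
    ring
end

section
/- Let g : ℝ → ℝ be twice differentiable and let ẏ₁ₓ, ÿ₂ₓ be real numbers. Define y(x) = g(x) + x(ẏ₁ₓ − g'(−1)) + x(x/2 + 1)(ÿ₂ₓ − g''(1)). Then y'(−1) = ẏ₁ₓ and y''(1) = ÿ₂ₓ. -/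
theorem stmt_10 (g : ℝ → ℝ) (hg : Differentiable ℝ g) (hg' : Differentiable ℝ (deriv g))
    (ydot₁ₓ yddot₂ₓ : ℝ) (y : ℝ → ℝ)
    (hy : ∀ x, y x = g x + x * (ydot₁ₓ - deriv g (-1))
        + x * (x / 2 + 1) * (yddot₂ₓ - deriv (deriv g) 1)) :
    deriv y (-1) = ydot₁ₓ ∧ deriv (deriv y) 1 = yddot₂ₓ := by
  set a := ydot₁ₓ - deriv g (-1) with ha
  set b := yddot₂ₓ - deriv (deriv g) 1 with hb
  have hyd : ∀ x : ℝ, HasDerivAt y (deriv g x + (a + (x + 1) * b)) x := by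
    intro x
    have h1 : HasDerivAt (fun x : ℝ => g x + x * a + x * (x / 2 + 1) * b)
        (deriv g x + 1 * a + (1 * (x / 2 + 1) + x * (1 / 2)) * b) x := by
      exact (((hg x).hasDerivAt.add ((hasDerivAt_id x).mul_const a)).add
        (((hasDerivAt_id x).mul ((hasDerivAt_id x).div_const 2 |>.add_const 1)).mul_const b))
    have : HasDerivAt y (deriv g x + 1 * a + (1 * (x / 2 + 1) + x * (1 / 2)) * b) x := by
      have := h1.congr_of_eventuallyEq (Filter.Eventually.of_forall fun t => (hy t))
      exact this
    convert this using 1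
    ring
  have hderiv : deriv y = fun x => deriv g x + (a + (x + 1) * b) :=
    funext fun x => (hyd x).deriv
  constructor
  · rw [(hyd (-1)).deriv]; ring_nf; rw [ha]; ring
  · have h2 : HasDerivAt (deriv y) (deriv (deriv g) 1 + b) 1 := by
      rw [hderiv]
      have : HasDerivAt (fun x : ℝ => deriv g x + (a + (x + 1) * b))
          (deriv (deriv g) 1 + (0 + 1 * b)) 1 :=
        ((hg' 1).hasDerivAt.add ((hasDerivAt_const 1 a).add
          (((hasDerivAt_id 1).add_const 1).mul_const b)))
      simpa using this
    rw [h2.deriv]; ring_nf; rw [hb]; ring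
end

section
/- Let g : ℝ → ℝ be twice differentiable and let ÿ₁ₓ, ÿ₂ₓ be real numbers. Define y(x) = g(x) + (x²/12)(3 − x)(ÿ₁ₓ − g''(−1)) + (x²/12)(3 + x)(ÿ₂ₓ − g''(1)). Then y''(−1) = ÿ₁ₓ and y''(1) = ÿ₂ₓ. -/
lemma poly_hasDerivAt_s11 (a b x : ℝ) :
    HasDerivAt (fun x : ℝ => x ^ 2 / 12 * (3 - x) * a + x ^ 2 / 12 * (3 + x) * b)
      (((6 * x - 3 * x ^ 2) * a + (6 * x + 3 * x ^ 2) * b) / 12) x := by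
  have h := ((((hasDerivAt_pow 2 x).div_const 12).mul
      ((hasDerivAt_const x 3).sub (hasDerivAt_id x))).mul_const a).add
    ((((hasDerivAt_pow 2 x).div_const 12).mul
      ((hasDerivAt_const x 3).add (hasDerivAt_id x))).mul_const b)
  simp only [id_eq, Pi.add_apply, Pi.sub_apply] at h
  refine h.congr_deriv ?_
  push_cast
  ring

lemma poly'_hasDerivAt (a b x : ℝ) :
    HasDerivAt (fun x : ℝ => ((6 * x - 3 * x ^ 2) * a + (6 * x + 3 * x ^ 2) * b) / 12)
      (((6 - 6 * x) * a + (6 + 6 * x) * b) / 12) x := by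
  have h := (((((hasDerivAt_id x).const_mul 6).sub ((hasDerivAt_pow 2 x).const_mul 3)).mul_const a).add
    ((((hasDerivAt_id x).const_mul 6).add ((hasDerivAt_pow 2 x).const_mul 3)).mul_const b)).div_const 12
  simp only [id_eq, Pi.add_apply, Pi.sub_apply] at h
  refine h.congr_deriv ?_
  push_cast
  ring

theorem stmt_11 (g : ℝ → ℝ) (hg : Differentiable ℝ g) (hg' : Differentiable ℝ (deriv g))
    (yddot₁ₓ yddot₂ₓ : ℝ) (y : ℝ → ℝ)
    (hy : ∀ x, y x = g x + x ^ 2 / 12 * (3 - x) * (yddot₁ₓ - deriv (deriv g) (-1))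
        + x ^ 2 / 12 * (3 + x) * (yddot₂ₓ - deriv (deriv g) 1)) :
    deriv (deriv y) (-1) = yddot₁ₓ ∧ deriv (deriv y) 1 = yddot₂ₓ := by
  set a := yddot₁ₓ - deriv (deriv g) (-1) with ha
  set b := yddot₂ₓ - deriv (deriv g) 1 with hb
  have hyfun : y = fun x => g x + (x ^ 2 / 12 * (3 - x) * a + x ^ 2 / 12 * (3 + x) * b) := by
    funext x; rw [hy x]; ring
  have h1 : ∀ x, deriv y x = deriv g x + ((6 * x - 3 * x ^ 2) * a + (6 * x + 3 * x ^ 2) * b) / 12 := by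
    intro x
    rw [hyfun]
    exact (((hg x).hasDerivAt.add (poly_hasDerivAt_s11 a b x)).deriv)
  have hyd : deriv y = fun x => deriv g x + ((6 * x - 3 * x ^ 2) * a + (6 * x + 3 * x ^ 2) * b) / 12 :=
    funext h1
  have h2 : ∀ x, deriv (deriv y) x = deriv (deriv g) x + ((6 - 6 * x) * a + (6 + 6 * x) * b) / 12 := by
    intro x
    rw [hyd]
    exact ((hg' x).hasDerivAt.add (poly'_hasDerivAt a b x)).deriv
  constructor
  · rw [h2 (-1), ha]; ring
  · rw [h2 1, hb]; ring
end

section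
/- Let g : ℝ → ℝ be twice differentiable and let ÿ₁ₓ, ẏ₂ₓ be real numbers. Define y(x) = g(x) + x(ẏ₂ₓ − g'(1)) + (x/2)(x − 2)(ÿ₁ₓ − g''(−1)). Then y''(−1) = ÿ₁ₓ and y'(1) = ẏ₂ₓ. -/
theorem stmt_12 (g : ℝ → ℝ) (hg : Differentiable ℝ g) (hg' : Differentiable ℝ (deriv g))
    (yddot₁ₓ ydot₂ₓ : ℝ) (y : ℝ → ℝ)
    (hy : ∀ x, y x = g x + x * (ydot₂ₓ - deriv g 1)
        + x / 2 * (x - 2) * (yddot₁ₓ - deriv (deriv g) (-1))) :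
    deriv (deriv y) (-1) = yddot₁ₓ ∧ deriv y 1 = ydot₂ₓ := by
  set a := ydot₂ₓ - deriv g 1 with ha
  set b := yddot₁ₓ - deriv (deriv g) (-1) with hb
  have hyf : y = fun x => g x + x * a + x / 2 * (x - 2) * b := funext hy
  have h1 : ∀ x : ℝ, deriv y x = deriv g x + a + (x - 1) * b := by
    intro x
    have hp : HasDerivAt (fun x : ℝ => g x + x * a + x / 2 * (x - 2) * b)
        (deriv g x + a + (x - 1) * b) x := by
      have := ((hg x).hasDerivAt.add ((hasDerivAt_id x).mul_const a)).add
        ((((hasDerivAt_id x).div_const 2).mul ((hasDerivAt_id x).sub_const 2)).mul_const b)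
      refine this.congr_deriv ?_
      simp only [id_eq]; ring
    rw [hyf]
    exact hp.deriv
  have h1f : deriv y = fun x => deriv g x + a + (x - 1) * b := funext h1
  constructor
  · have hp : HasDerivAt (fun x : ℝ => deriv g x + a + (x - 1) * b)
        (deriv (deriv g) (-1) + b) (-1) := by
      have := (((hg' (-1)).hasDerivAt.add_const a).add
        (((hasDerivAt_id (-1:ℝ)).sub_const 1).mul_const b))
      refine this.congr_deriv ?_
      ring
    rw [h1f, hp.deriv, hb]
    ring
  · rw [h1 1, ha]
    ring
end
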